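/- arXiv:math/0212210 — 3 statements merged into one kernel-verified Lean document; each statement's English description precedes it below -/
import Mathlib

section
/- Let n ∈ ℕ and p ∈ ℕ with 2p < n. At any point (u₁,…,u_p,ψ₁,…,ψ_p) with ψ_α ≠ 0, u_α ∉ Γ for all α and u_α − u_β ∉ Γ for all α ≠ β, the 2p × 2p antisymmetric matrix of pairwise brackets of the coordinate functions, with entries {u_α,u_β} = 0, {u_α,ψ_β} = ψ_β (α ≠ β), {u_α,ψ_α} = −((n−2)/2)ψ_α, {ψ_α,u_β} = −{u_β,ψ_α}, and {ψ_α,ψ_β} = n(ζ(u_α−u_β) − ζ(u_α) + ζ(u_β))ψ_αψ_β (α ≠ β), is invertible; i.e. the Poisson structure defined by formulas (3) is nondegenerate on this open set when 2p < n. -/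
noncomputable section

/-- The lattice `Γ = ℤω₁ + ℤω₂ ⊂ ℂ`. -/
def lat (ω₁ ω₂ : ℂ) : Set ℂ := {z | ∃ a b : ℤ, z = (a : ℂ) * ω₁ + (b : ℂ) * ω₂}

/-- `Γ' = Γ \ {0}`. -/
def latp (ω₁ ω₂ : ℂ) : Set ℂ := {z | z ∈ lat ω₁ ω₂ ∧ z ≠ 0}

/-- The Weierstrass `℘`-function of the lattice `Γ`. -/
def wp (ω₁ ω₂ : ℂ) (z : ℂ) : ℂ :=
  1 / z ^ 2 + ∑' w : latp ω₁ ω₂, (1 / (z - (w : ℂ)) ^ 2 - 1 / (w : ℂ) ^ 2)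

/-- The Weierstrass `ζ`-function of the lattice `Γ`. -/
def wz (ω₁ ω₂ : ℂ) (z : ℂ) : ℂ :=
  1 / z + ∑' w : latp ω₁ ω₂, (1 / (z - (w : ℂ)) + 1 / (w : ℂ) + z / (w : ℂ) ^ 2)


/-- The `2p × 2p` antisymmetric matrix of pairwise brackets of the coordinate functions
`(u₁,…,u_p,ψ₁,…,ψ_p)` given by formulas (3). -/
def Mbv (ω₁ ω₂ : ℂ) (n : ℕ) {p : ℕ} (u ψ : Fin p → ℂ) :
    Matrix (Fin p ⊕ Fin p) (Fin p ⊕ Fin p) ℂ :=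
  Matrix.of fun i j =>
    match i, j with
    | .inl _, .inl _ => 0
    | .inl α, .inr β => (if α = β then -(((n : ℂ) - 2) / 2) else 1) * ψ β
    | .inr α, .inl β => -((if β = α then -(((n : ℂ) - 2) / 2) else 1) * ψ α)
    | .inr α, .inr β =>
        if α = β then 0 else
          (n : ℂ) * (wz ω₁ ω₂ (u α - u β) - wz ω₁ ω₂ (u α) + wz ω₁ ω₂ (u β)) * ψ α * ψ β

/-- If `2p < n`, the Poisson structure (3) is nondegenerate on the open set
`{ψ_α ≠ 0, u_α ∉ Γ, u_α − u_β ∉ Γ}`: the matrix of pairwise brackets is invertible. -/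
theorem stmt10 (ω₁ ω₂ : ℂ) (hΓ : LinearIndependent ℝ ![ω₁, ω₂])
    (n p : ℕ) (hpn : 2 * p < n) (u ψ : Fin p → ℂ)
    (hψ : ∀ α, ψ α ≠ 0) (hu : ∀ α, u α ∉ lat ω₁ ω₂)
    (huu : ∀ α β, α ≠ β → u α - u β ∉ lat ω₁ ω₂) :
    IsUnit (Mbv ω₁ ω₂ n u ψ) := by
  classical
  -- auxiliary matrices
  set c : ℂ := -(((n : ℂ) - 2) / 2) with hc
  set d : ℂ := -((n : ℂ) / 2) with hd
  have hn0 : (n : ℂ) ≠ 0 := by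
    have : 0 < n := lt_of_le_of_lt (Nat.zero_le _) hpn
    exact_mod_cast this.ne'
  have hd0 : d ≠ 0 := by
    simp [hd, hn0]
  have hdp : d + (p : ℂ) ≠ 0 := by
    intro h
    have h2 : (n : ℂ) = 2 * p := by
      rw [hd] at h
      linear_combination -2 * h
    have : (n : ℕ) = 2 * p := by exact_mod_cast h2
    omega
  set C₀ : Matrix (Fin p) (Fin p) ℂ := Matrix.of (fun α β => if α = β then c else 1) with hC₀
  have hC0eq : C₀ = d • (1 + Matrix.replicateCol Unit (fun _ => 1 / d) * Matrix.replicateRow Unit (fun _ => (1 : ℂ))) := by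
    ext α β
    by_cases h : α = β
    · subst h
      simp [hC₀, Matrix.one_apply, Matrix.mul_apply, mul_add, hc, hd]
      field_simp
      ring
    · simp [hC₀, Matrix.one_apply, h, Matrix.mul_apply, mul_add, hd0]
  have hC0unit : IsUnit C₀ := by
    rw [Matrix.isUnit_iff_isUnit_det, hC0eq, Matrix.det_smul,
      Matrix.det_one_add_replicateCol_mul_replicateRow]
    have hdp' : dotProduct (fun _ : Fin p => (1 : ℂ)) (fun _ => 1 / d)
        = (p : ℂ) * (1 / d) := by
      simp [dotProduct]
    have h1 : (1 : ℂ) + (p : ℂ) * (1 / d) = (d + p) / d := by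
      field_simp
    rw [Fintype.card_fin, hdp', h1]
    exact ((isUnit_iff_ne_zero.mpr hd0).pow p).mul
      (isUnit_iff_ne_zero.mpr (div_ne_zero hdp hd0))
  set B : Matrix (Fin p) (Fin p) ℂ := C₀ * Matrix.diagonal ψ with hB
  have hBunit : IsUnit B := by
    refine hC0unit.mul ?_
    rw [Matrix.isUnit_iff_isUnit_det, Matrix.det_diagonal]
    exact isUnit_iff_ne_zero.mpr (Finset.prod_ne_zero_iff.mpr fun α _ => hψ α)
  have hBentry : ∀ α β, B α β = (if α = β then c else 1) * ψ β := by
    intro α β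
    simp [hB, Matrix.mul_diagonal, hC₀]
  have hBinj : Function.Injective B.mulVec := Matrix.mulVec_injective_iff_isUnit.mpr hBunit
  have hBtunit : IsUnit B.transpose := by
    rw [Matrix.isUnit_iff_isUnit_det, Matrix.det_transpose,
      ← Matrix.isUnit_iff_isUnit_det]
    exact hBunit
  have hBtinj : Function.Injective B.transpose.mulVec := Matrix.mulVec_injective_iff_isUnit.mpr hBtunit
  rw [← Matrix.mulVec_injective_iff_isUnit]
  have key : ∀ v, (Mbv ω₁ ω₂ n u ψ).mulVec v = 0 → v = 0 := by
    intro v hv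
    set x : Fin p → ℂ := fun β => v (Sum.inl β) with hx
    set y : Fin p → ℂ := fun β => v (Sum.inr β) with hy
    have hyeq : B.mulVec y = 0 := by
      funext α
      have h1 := congrFun hv (Sum.inl α)
      simp only [Matrix.mulVec, dotProduct, Fintype.sum_sum_type, Mbv, Matrix.of_apply, dotProduct,
        Pi.zero_apply, zero_mul, Finset.sum_const_zero, zero_add] at h1 ⊢
      rw [← h1]
      apply Finset.sum_congr rfl
      intro β _
      rw [hBentry]
    have hy0 : y = 0 := hBinj (by rw [hyeq, Matrix.mulVec_zero])
    have hxeq : B.transpose.mulVec x = 0 := by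
      funext α
      have h1 := congrFun hv (Sum.inr α)
      simp only [Matrix.mulVec, dotProduct, Fintype.sum_sum_type, Mbv, Matrix.of_apply, dotProduct,
        Pi.zero_apply] at h1 ⊢
      have hsecond : ∀ β : Fin p,
          (if α = β then 0 else
            (n : ℂ) * (wz ω₁ ω₂ (u α - u β) - wz ω₁ ω₂ (u α) + wz ω₁ ω₂ (u β)) * ψ α * ψ β)
            * v (Sum.inr β) = 0 := by
        intro β
        have : v (Sum.inr β) = 0 := congrFun hy0 β
        rw [this, mul_zero]
      rw [Finset.sum_congr rfl (fun β _ => hsecond β), Finset.sum_const_zero, add_zero] at h1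
      have h2 : ∑ β, -((if β = α then c else 1) * ψ α) * v (Sum.inl β) = 0 := h1
      have h3 : ∑ β, B.transpose α β * x β = 0 := by
        rw [← neg_eq_zero, ← Finset.sum_neg_distrib, ← h2]
        apply Finset.sum_congr rfl
        intro β _
        rw [Matrix.transpose_apply, hBentry]
        ring
      exact h3
    have hx0 : x = 0 := hBtinj (by rw [hxeq, Matrix.mulVec_zero])
    funext i
    cases i with
    | inl β => exact congrFun hx0 β
    | inr β => exact congrFun hy0 β
  intro v w hvw
  have := key (v - w) (by rw [Matrix.mulVec_sub, hvw, sub_self])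
  exact sub_eq_zero.mp this
end
end

section
/- Let n, p ∈ ℕ, p ≥ 1, and let f be a symmetric function of p+1 complex variables lying in S^{p+1}𝓕_n, i.e. a finite ℂ-linear combination of symmetrizations of products f₁(z₁)⋯f_{p+1}(z_{p+1}) with f₁,…,f_{p+1} ∈ 𝓕_n. Define X_p(f)(u₁,…,u_p,ψ₁,…,ψ_p) = Σ_{(α₁,…,α_{p+1}) ∈ {1,…,p}^{p+1}} f(u_{α₁},…,u_{α_{p+1}}) ψ_{α₁}⋯ψ_{α_{p+1}} (the values of f at points with repeated coordinates being those of its holomorphic extension). Then X_p(f) vanishes identically (for all u_j ∉ Γ with u_j − u_k ∉ Γ, j ≠ k, and all ψ) if and only if f(z₁,…,z_{p+1}) = 0 at every point where z_j − z_k ∈ Γ for some j ≠ k. -/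
noncomputable section

/-- `f ∈ 𝓕_n`: a meromorphic `Γ`-elliptic function, holomorphic on `ℂ ∖ Γ`, whose poles
at the points of `Γ` have order at most `n`. -/
def MemFn (ω₁ ω₂ : ℂ) (n : ℕ) (f : ℂ → ℂ) : Prop :=
  (∀ z ∉ lat ω₁ ω₂, ∀ w ∈ lat ω₁ ω₂, f (z + w) = f z) ∧
  (∀ z ∉ lat ω₁ ω₂, DifferentiableAt ℂ f z) ∧
  (∀ γ ∈ lat ω₁ ω₂, ∃ g : ℂ → ℂ, AnalyticAt ℂ g γ ∧
    ∀ᶠ z in nhdsWithin γ {γ}ᶜ, g z = (z - γ) ^ n * f z)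

section Aux

variable {ω₁ ω₂ : ℂ}

lemma lat_zero : (0:ℂ) ∈ lat ω₁ ω₂ := ⟨0, 0, by push_cast; ring⟩

lemma lat_sub {x y : ℂ} (hx : x ∈ lat ω₁ ω₂) (hy : y ∈ lat ω₁ ω₂) : x - y ∈ lat ω₁ ω₂ := by
  obtain ⟨a, b, rfl⟩ := hx; obtain ⟨a', b', rfl⟩ := hy
  exact ⟨a - a', b - b', by push_cast; ring⟩

lemma lat_add {x y : ℂ} (hx : x ∈ lat ω₁ ω₂) (hy : y ∈ lat ω₁ ω₂) : x + y ∈ lat ω₁ ω₂ := by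
  obtain ⟨a, b, rfl⟩ := hx; obtain ⟨a', b', rfl⟩ := hy
  exact ⟨a + a', b + b', by push_cast; ring⟩

lemma lat_neg {x : ℂ} (hx : x ∈ lat ω₁ ω₂) : -x ∈ lat ω₁ ω₂ := by
  simpa using lat_sub (lat_zero (ω₁ := ω₁) (ω₂ := ω₂)) hx

lemma lat_countable : (lat ω₁ ω₂).Countable := by
  have : lat ω₁ ω₂ ⊆ Set.range (fun q : ℤ × ℤ => (q.1 : ℂ) * ω₁ + (q.2 : ℂ) * ω₂) := by
    rintro z ⟨a, b, rfl⟩; exact ⟨(a, b), rfl⟩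
  exact (Set.countable_range _).mono this

lemma exists_fresh (F : Finset ℂ) :
    ∃ x : ℂ, x ∉ lat ω₁ ω₂ ∧ ∀ y ∈ F, x - y ∉ lat ω₁ ω₂ := by
  have hc : (lat ω₁ ω₂ ∪ ⋃ y ∈ F, {x : ℂ | x - y ∈ lat ω₁ ω₂}).Countable := by
    refine (lat_countable).union (Set.Countable.biUnion F.countable_toSet fun y _ => ?_)
    have : {x : ℂ | x - y ∈ lat ω₁ ω₂} = (fun t => t + y) '' lat ω₁ ω₂ := by
      ext x; constructor
      · intro hx; exact ⟨x - y, hx, by ring⟩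
      · rintro ⟨t, ht, rfl⟩; simpa using ht
    rw [this]; exact lat_countable.image _
  have hne : (lat ω₁ ω₂ ∪ ⋃ y ∈ F, {x : ℂ | x - y ∈ lat ω₁ ω₂}) ≠ Set.univ := by
    intro h
    exact not_countable_complex (h ▸ hc)
  obtain ⟨x, hx⟩ := Set.ne_univ_iff_exists_notMem _ |>.mp hne
  refine ⟨x, fun h => hx (Or.inl h), fun y hy h => hx (Or.inr ?_)⟩
  exact Set.mem_biUnion hy h

lemma extend_reps (p : ℕ) : ∀ (k : ℕ) (s : Finset (Fin p)) (u₀ : Fin p → ℂ),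
    (sᶜ).card = k →
    (∀ α ∈ s, u₀ α ∉ lat ω₁ ω₂) →
    (∀ α ∈ s, ∀ β ∈ s, α ≠ β → u₀ α - u₀ β ∉ lat ω₁ ω₂) →
    ∃ u : Fin p → ℂ, (∀ α ∈ s, u α = u₀ α) ∧ (∀ α, u α ∉ lat ω₁ ω₂) ∧
      (∀ α β, α ≠ β → u α - u β ∉ lat ω₁ ω₂) := by
  intro k
  induction k with
  | zero =>
    intro s u₀ hcard h1 h2
    have hs : s = Finset.univ := by
      have h1 := Finset.card_compl s
      rw [hcard] at h1
      have h2 := Finset.card_le_univ s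
      apply Finset.eq_univ_of_card
      simp only [Fintype.card_fin, Finset.card_univ] at h1 h2 ⊢
      omega
    exact ⟨u₀, fun α _ => rfl, fun α => h1 α (hs ▸ Finset.mem_univ α),
      fun α β hab => h2 α (hs ▸ Finset.mem_univ α) β (hs ▸ Finset.mem_univ β) hab⟩
  | succ k ih =>
    intro s u₀ hcard h1 h2
    have hne : (sᶜ).Nonempty := by rw [← Finset.card_pos, hcard]; omega
    obtain ⟨α₀, hα₀⟩ := hne
    have hα₀s : α₀ ∉ s := Finset.mem_compl.mp hα₀
    obtain ⟨x, hx1, hx2⟩ := exists_fresh (ω₁ := ω₁) (ω₂ := ω₂) (s.image u₀)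
    set u₁ := Function.update u₀ α₀ x with hu₁
    have hval : ∀ α ∈ s, u₁ α = u₀ α := fun α hα =>
      by
      rw [hu₁, Function.update_of_ne (fun h => hα₀s (by rw [← h]; exact hα))]
    have hcard' : ((insert α₀ s)ᶜ).card = k := by
      rw [Finset.card_compl, Finset.card_insert_of_notMem hα₀s]
      rw [Finset.card_compl] at hcard; omega
    have h1' : ∀ α ∈ insert α₀ s, u₁ α ∉ lat ω₁ ω₂ := by
      intro α hα
      rcases Finset.mem_insert.mp hα with rfl | hα
      · simpa [u₁] using hx1
      · rw [hval α hα]; exact h1 α hα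
    have h2' : ∀ α ∈ insert α₀ s, ∀ β ∈ insert α₀ s, α ≠ β → u₁ α - u₁ β ∉ lat ω₁ ω₂ := by
      intro α hα β hβ hab
      rcases Finset.mem_insert.mp hα with h₁ | h₁
      · rcases Finset.mem_insert.mp hβ with h₂ | h₂
        · exact absurd (h₁.trans h₂.symm) hab
        · subst h₁; rw [hval β h₂]; simp only [u₁, Function.update_self]
          exact hx2 (u₀ β) (Finset.mem_image_of_mem _ h₂)
      · rcases Finset.mem_insert.mp hβ with h₂ | h₂
        · subst h₂; rw [hval α h₁]; simp only [u₁, Function.update_self]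
          intro h
          have := lat_neg h
          rw [neg_sub] at this
          exact hx2 (u₀ α) (Finset.mem_image_of_mem _ h₁) this
        · rw [hval α h₁, hval β h₂]; exact h2 α h₁ β h₂ hab
    obtain ⟨u, hu1, hu2, hu3⟩ := ih (insert α₀ s) u₁ hcard' h1' h2'
    exact ⟨u, fun α hα => (hu1 α (Finset.mem_insert_of_mem hα)).trans (hval α hα), hu2, hu3⟩

variable {n p N : ℕ} {c : Fin N → ℂ} {Ff : Fin N → Fin (p + 1) → ℂ → ℂ}
  {f : (Fin (p + 1) → ℂ) → ℂ}

lemma f_symm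
    (hf : ∀ z : Fin (p + 1) → ℂ, (∀ j, z j ∉ lat ω₁ ω₂) →
      f z = ∑ i, c i * ((1 / (Nat.factorial (p + 1) : ℂ)) *
        ∑ σ : Equiv.Perm (Fin (p + 1)), ∏ j, Ff i j (z (σ j))))
    (w : Fin (p + 1) → ℂ) (hw : ∀ j, w j ∉ lat ω₁ ω₂) (τ : Equiv.Perm (Fin (p + 1))) :
    f (fun j => w (τ j)) = f w := by
  rw [hf w hw, hf (fun j => w (τ j)) (fun j => hw _)]
  refine Finset.sum_congr rfl fun i _ => ?_
  congr 2
  exact Fintype.sum_equiv (Equiv.mulLeft τ) _ _ (fun σ => rfl)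

lemma f_per
    (hFf : ∀ i j, MemFn ω₁ ω₂ n (Ff i j))
    (hf : ∀ z : Fin (p + 1) → ℂ, (∀ j, z j ∉ lat ω₁ ω₂) →
      f z = ∑ i, c i * ((1 / (Nat.factorial (p + 1) : ℂ)) *
        ∑ σ : Equiv.Perm (Fin (p + 1)), ∏ j, Ff i j (z (σ j))))
    (w γ : Fin (p + 1) → ℂ) (hw : ∀ j, w j ∉ lat ω₁ ω₂) (hγ : ∀ j, γ j ∈ lat ω₁ ω₂) :
    f (fun j => w j + γ j) = f w := by
  have hw' : ∀ j, w j + γ j ∉ lat ω₁ ω₂ := by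
    intro j h
    have := lat_sub h (hγ j)
    simp only [add_sub_cancel_right] at this
    exact hw j this
  rw [hf w hw, hf (fun j => w j + γ j) hw']
  refine Finset.sum_congr rfl fun i _ => ?_
  congr 2
  refine Finset.sum_congr rfl fun σ _ => Finset.prod_congr rfl fun j _ => ?_
  exact (hFf i j).1 (w (σ j)) (hw _) (γ (σ j)) (hγ _)

end Aux

open MvPolynomial

/-- Characterization of `ker x_p ∩ S^{p+1}𝓕_n`: for a symmetric function
`f ∈ S^{p+1}𝓕_n` (a linear combination of symmetrizations of products of functions in `𝓕_n`),
the element `X_p(f) = Σ_{α : {1,…,p+1} → {1,…,p}} f(u_{α₁},…,u_{α_{p+1}}) ψ_{α₁}⋯ψ_{α_{p+1}}`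
vanishes identically if and only if `f` vanishes at every point where two of its arguments are
congruent modulo `Γ`. -/
theorem stmt11 (ω₁ ω₂ : ℂ) (hΓ : LinearIndependent ℝ ![ω₁, ω₂])
    (n p : ℕ) (hp : 1 ≤ p)
    (N : ℕ) (c : Fin N → ℂ) (Ff : Fin N → Fin (p + 1) → ℂ → ℂ)
    (hFf : ∀ i j, MemFn ω₁ ω₂ n (Ff i j))
    (f : (Fin (p + 1) → ℂ) → ℂ)
    (hf : ∀ z : Fin (p + 1) → ℂ, (∀ j, z j ∉ lat ω₁ ω₂) →
      f z = ∑ i, c i * ((1 / (Nat.factorial (p + 1) : ℂ)) *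
        ∑ σ : Equiv.Perm (Fin (p + 1)), ∏ j, Ff i j (z (σ j)))) :
    (∀ u ψ : Fin p → ℂ, (∀ α, u α ∉ lat ω₁ ω₂) →
        (∀ α β, α ≠ β → u α - u β ∉ lat ω₁ ω₂) →
        ∑ a : Fin (p + 1) → Fin p, f (fun j => u (a j)) * ∏ j, ψ (a j) = 0)
    ↔ (∀ z : Fin (p + 1) → ℂ, (∀ j, z j ∉ lat ω₁ ω₂) →
        (∃ j k, j ≠ k ∧ z j - z k ∈ lat ω₁ ω₂) → f z = 0) := by
  classical
  constructor
  · -- forward direction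
    intro H z hz hex
    obtain ⟨j, k, hjk, hcong⟩ := hex
    -- the "class" of an index and its least representative
    set Cl : Fin (p+1) → Finset (Fin (p+1)) :=
      fun m => Finset.univ.filter (fun m' => z m - z m' ∈ lat ω₁ ω₂) with hCl
    have hClne : ∀ m, (Cl m).Nonempty :=
      fun m => ⟨m, by simp [hCl, sub_self, lat_zero]⟩
    set r : Fin (p+1) → Fin (p+1) := fun m => (Cl m).min' (hClne m) with hrdef
    have hr1 : ∀ m, z m - z (r m) ∈ lat ω₁ ω₂ := by
      intro m
      have := (Cl m).min'_mem (hClne m)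
      simpa [hCl] using this
    have hr2 : ∀ m m', z m - z m' ∈ lat ω₁ ω₂ → r m = r m' := by
      intro m m' h
      have hEq : Cl m = Cl m' := by
        ext m''
        simp only [hCl, Finset.mem_filter, Finset.mem_univ, true_and]
        constructor
        · intro h2
          have h3 := lat_sub h2 h
          have e : (z m - z m'') - (z m - z m') = z m' - z m'' := by ring
          rwa [e] at h3
        · intro h2
          have h3 := lat_add h2 h
          have e : (z m' - z m'') + (z m - z m') = z m - z m'' := by ring
          rwa [e] at h3
      simp only [hrdef]
      congr 1
    have hr3 : ∀ m m', r m = r m' → z m - z m' ∈ lat ω₁ ω₂ := by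
      intro m m' h
      have h3 := lat_sub (hr1 m) (hr1 m')
      have e : (z m - z (r m)) - (z m' - z (r m')) = z m - z m' := by rw [h]; ring
      rwa [e] at h3
    set R : Finset (Fin (p+1)) := (Finset.univ.erase k).image r with hR
    have hmemR : ∀ m, r m ∈ R := by
      intro m
      by_cases hmk : m = k
      · have hrm : r m = r j := by
          rw [hmk]
          exact hr2 k j (by have := lat_neg hcong; rwa [neg_sub] at this)
        rw [hrm]
        exact Finset.mem_image_of_mem r (Finset.mem_erase.mpr ⟨hjk, Finset.mem_univ j⟩)
      · exact Finset.mem_image_of_mem r (Finset.mem_erase.mpr ⟨hmk, Finset.mem_univ m⟩)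
    have hRcard : R.card ≤ p := by
      refine le_trans Finset.card_image_le ?_
      rw [Finset.card_erase_of_mem (Finset.mem_univ k)]
      simp
    obtain ⟨emb⟩ : Nonempty (↥R ↪ Fin p) :=
      Function.Embedding.nonempty_of_card_le (by simpa [Fintype.card_coe] using hRcard)
    set a₀ : Fin (p+1) → Fin p := fun m => emb ⟨r m, hmemR m⟩ with ha₀
    set s : Finset (Fin p) := R.attach.image (fun x => emb x) with hs
    set u₀ : Fin p → ℂ := fun α =>
      if h : ∃ x : ↥R, emb x = α then z ((Classical.choose h : ↥R) : Fin (p+1)) else 0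
      with hu₀def
    have hu₀ : ∀ x : ↥R, u₀ (emb x) = z (x : Fin (p+1)) := by
      intro x
      have hex2 : ∃ y : ↥R, emb y = emb x := ⟨x, rfl⟩
      simp only [hu₀def]
      rw [dif_pos hex2]
      have h1 := Classical.choose_spec hex2
      have h2 : Classical.choose hex2 = x := emb.injective h1
      rw [h2]
    have hsmem : ∀ α ∈ s, ∃ x : ↥R, emb x = α := by
      intro α hα
      simp only [hs, Finset.mem_image] at hα
      obtain ⟨x, _, hx⟩ := hα
      exact ⟨x, hx⟩
    have hrep : ∀ x : ↥R, ∃ m : Fin (p+1), r m = (x : Fin (p+1)) := by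
      intro x
      have := x.property
      simp only [hR, Finset.mem_image] at this
      obtain ⟨m, _, hm⟩ := this
      exact ⟨m, hm⟩
    have h1s : ∀ α ∈ s, u₀ α ∉ lat ω₁ ω₂ := by
      intro α hα
      obtain ⟨x, rfl⟩ := hsmem α hα
      rw [hu₀ x]
      obtain ⟨m, hm⟩ := hrep x
      rw [← hm]
      exact hz (r m)
    have h2s : ∀ α ∈ s, ∀ β ∈ s, α ≠ β → u₀ α - u₀ β ∉ lat ω₁ ω₂ := by
      intro α hα β hβ hab
      obtain ⟨x, rfl⟩ := hsmem α hα
      obtain ⟨y, rfl⟩ := hsmem β hβ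
      rw [hu₀ x, hu₀ y]
      obtain ⟨m, hm⟩ := hrep x
      obtain ⟨m', hm'⟩ := hrep y
      rw [← hm, ← hm']
      intro hlat
      have h4 : z m - z m' ∈ lat ω₁ ω₂ := by
        have h5 := lat_add (lat_add (hr1 m) hlat) (lat_neg (hr1 m'))
        have e : (z m - z (r m) + (z (r m) - z (r m'))) + -(z m' - z (r m')) = z m - z m' := by
          ring
        rwa [e] at h5
      have hrr := hr2 m m' h4
      apply hab
      have hxy : (x : Fin (p+1)) = (y : Fin (p+1)) := by rw [← hm, ← hm']; exact hrr
      exact congrArg emb (Subtype.ext hxy)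
    obtain ⟨u, hu1, hu2, hu3⟩ :=
      extend_reps (ω₁ := ω₁) (ω₂ := ω₂) p ((sᶜ).card) s u₀ rfl h1s h2s
    have hus : ∀ x : ↥R, u (emb x) = z (x : Fin (p+1)) := by
      intro x
      have hmem : emb x ∈ s := by
        simp only [hs, Finset.mem_image]
        exact ⟨x, Finset.mem_attach _ x, rfl⟩
      rw [hu1 _ hmem, hu₀ x]
    -- polynomial argument
    set F : (Fin (p+1) → Fin p) → ℂ := fun a => f (fun j' => u (a j')) with hF
    have hsum : ∀ ψ : Fin p → ℂ, ∑ a : Fin (p+1) → Fin p, F a * ∏ j', ψ (a j') = 0 :=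
      fun ψ => H u ψ hu2 hu3
    set d : (Fin (p+1) → Fin p) → (Fin p →₀ ℕ) :=
      fun a => ∑ j' : Fin (p+1), Finsupp.single (a j') 1 with hd
    have hmono : ∀ a : Fin (p+1) → Fin p,
        (∏ j' : Fin (p+1), (X (a j') : MvPolynomial (Fin p) ℂ)) = monomial (d a) (1:ℂ) := by
      intro a
      rw [hd, monomial_sum_one]
      refine Finset.prod_congr rfl fun j' _ => ?_
      rw [← X_pow_eq_monomial, pow_one]
    set P : MvPolynomial (Fin p) ℂ :=
      ∑ a : Fin (p+1) → Fin p, C (F a) * ∏ j' : Fin (p+1), X (a j') with hP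
    have hPzero : P = 0 := by
      apply MvPolynomial.funext
      intro ψ
      rw [map_zero]
      rw [hP, map_sum]
      rw [← hsum ψ]
      refine Finset.sum_congr rfl fun a _ => ?_
      rw [map_mul, eval_C, map_prod]
      simp [eval_X]
    have hcoeff : ∑ a : Fin (p+1) → Fin p, (if d a = d a₀ then F a else 0) = 0 := by
      have h0 := congrArg (coeff (d a₀)) hPzero
      rw [hP, coeff_zero, coeff_sum] at h0
      refine Eq.trans (Finset.sum_congr rfl fun a _ => ?_) h0
      rw [hmono a, C_mul_monomial, mul_one, coeff_monomial]
    -- all `a` in the fiber give the same value of F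
    have hfib : ∀ a : Fin (p+1) → Fin p, d a = d a₀ → F a = F a₀ := by
      intro a hda
      have hcard : ∀ α, Fintype.card {j' // a j' = α} = Fintype.card {j' // a₀ j' = α} := by
        intro α
        have h1 : (d a) α = (d a₀) α := by rw [hda]
        simp only [hd, Finsupp.finset_sum_apply, Finsupp.single_apply] at h1
        rw [Fintype.card_subtype, Fintype.card_subtype]
        rw [Finset.card_filter, Finset.card_filter]
        simpa using h1
      set σ : Fin (p+1) ≃ Fin (p+1) :=
        Equiv.ofFiberEquiv (f := a) (g := a₀) (fun α => Fintype.equivOfCardEq (hcard α)) with hσ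
      have hσm : ∀ j', a₀ (σ j') = a j' := fun j' => Equiv.ofFiberEquiv_map _ j'
      have step1 : F a = f (fun j' => u (a₀ (σ j'))) := by
        rw [hF]
        congr 1
        funext j'
        rw [hσm j']
      rw [step1]
      exact f_symm hf (fun j' => u (a₀ j')) (fun j' => hu2 _) σ
    have hsum2 :
        ((Finset.univ.filter (fun a : Fin (p+1) → Fin p => d a = d a₀)).card : ℂ) * F a₀ = 0 := by
      rw [← hcoeff, ← Finset.sum_filter,
        Finset.sum_congr rfl (fun a ha => hfib a (Finset.mem_filter.mp ha).2),
        Finset.sum_const, nsmul_eq_mul]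
    have hcardne : ((Finset.univ.filter (fun a : Fin (p+1) → Fin p => d a = d a₀)).card : ℂ) ≠ 0 := by
      rw [Nat.cast_ne_zero, ← Nat.pos_iff_ne_zero, Finset.card_pos]
      exact ⟨a₀, Finset.mem_filter.mpr ⟨Finset.mem_univ _, rfl⟩⟩
    have hFa₀ : F a₀ = 0 := by
      rcases mul_eq_zero.mp hsum2 with h | h
      · exact absurd h hcardne
      · exact h
    -- transfer back to z via periodicity
    have hzu : ∀ m, z m - u (a₀ m) ∈ lat ω₁ ω₂ := by
      intro m
      have : u (a₀ m) = z (r m) := hus ⟨r m, hmemR m⟩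
      rw [this]
      exact hr1 m
    have := f_per hFf hf (fun m => u (a₀ m)) (fun m => z m - u (a₀ m))
      (fun m => hu2 _) hzu
    have hzeq : (fun m => u (a₀ m) + (z m - u (a₀ m))) = z := by
      funext m; ring
    rw [hzeq] at this
    rw [this]
    exact hFa₀
  · -- backward direction
    intro H u ψ hu hu2
    refine Finset.sum_eq_zero fun a _ => ?_
    obtain ⟨j₀, k₀, hne, heq⟩ :=
      Fintype.exists_ne_map_eq_of_card_lt a (by simp)
    have : f (fun j' => u (a j')) = 0 := by
      refine H _ (fun j' => hu (a j')) ⟨j₀, k₀, hne, ?_⟩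
      simp only [heq, sub_self]
      exact lat_zero
    rw [this, zero_mul]
end
end

section
/- Let p ≥ 1 and let (f_{α,β})_{1≤α,β≤p+1} be a matrix of functions in 𝓕 which has rank 1 pointwise, i.e. f_{α,β}(z) f_{α′,β′}(z) = f_{α,β′}(z) f_{α′,β}(z) for all α, α′, β, β′ and all z ∉ Γ. Then for all z₁,…,z_{p+1} ∉ Γ such that z_j − z_k ∈ Γ for some j ≠ k, the determinant det( f_{α,β}(z_β) )_{1≤α,β≤p+1} equals 0. Consequently the symmetrized function (z₁,…,z_{p+1}) ↦ (1/(p+1)!) Σ_{σ ∈ S_{p+1}} det( f_{α,β}(z_{σ(β)}) ) vanishes on all divisors z_j − z_k ∈ Γ, i.e. det(f_{α,β}) ∈ ker x_p. -/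
noncomputable section

/-- `f ∈ 𝓕`: a meromorphic `Γ`-elliptic function, holomorphic on `ℂ ∖ Γ`. -/
def MemF (ω₁ ω₂ : ℂ) (f : ℂ → ℂ) : Prop :=
  (∀ z ∉ lat ω₁ ω₂, ∀ w ∈ lat ω₁ ω₂, f (z + w) = f z) ∧
  (∀ z ∉ lat ω₁ ω₂, DifferentiableAt ℂ f z) ∧
  (∀ γ ∈ lat ω₁ ω₂, ∃ (k : ℕ) (g : ℂ → ℂ), AnalyticAt ℂ g γ ∧
    ∀ᶠ z in nhdsWithin γ {γ}ᶜ, g z = (z - γ) ^ k * f z)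

/-- If `(f_{α,β})` is a `(p+1)×(p+1)` matrix of functions in `𝓕` of pointwise rank 1, then
`det(f_{α,β}(z_β)) = 0` whenever two of the points `z₁,…,z_{p+1}` are congruent mod `Γ`;
consequently the symmetrized determinant vanishes on all divisors `z_j − z_k ∈ Γ`,
i.e. `det(f_{α,β}) ∈ ker x_p`. -/
theorem stmt12 (ω₁ ω₂ : ℂ) (hΓ : LinearIndependent ℝ ![ω₁, ω₂])
    (p : ℕ) (hp : 1 ≤ p)
    (f : Fin (p + 1) → Fin (p + 1) → ℂ → ℂ)
    (hmem : ∀ α β, MemF ω₁ ω₂ (f α β))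
    (hrk : ∀ α α' β β', ∀ z ∉ lat ω₁ ω₂,
      f α β z * f α' β' z = f α β' z * f α' β z) :
    ∀ z : Fin (p + 1) → ℂ, (∀ j, z j ∉ lat ω₁ ω₂) →
      (∃ j k, j ≠ k ∧ z j - z k ∈ lat ω₁ ω₂) →
      Matrix.det (Matrix.of fun α β => f α β (z β)) = 0 ∧
      (1 / (Nat.factorial (p + 1) : ℂ)) * ∑ σ : Equiv.Perm (Fin (p + 1)),
        Matrix.det (Matrix.of fun α β => f α β (z (σ β))) = 0 := by
  have main : ∀ w : Fin (p + 1) → ℂ, (∀ i, w i ∉ lat ω₁ ω₂) →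
      (∃ j k, j ≠ k ∧ w j - w k ∈ lat ω₁ ω₂) →
      Matrix.det (Matrix.of fun α β => f α β (w β)) = 0 := by
    rintro w hw ⟨j, k, hjk, hγ⟩
    set M : Matrix (Fin (p + 1)) (Fin (p + 1)) ℂ :=
      Matrix.of fun α β => f α β (w β) with hM
    -- periodicity: f α j (w j) = f α j (w k)
    have hper : ∀ α, f α j (w j) = f α j (w k) := by
      intro α
      have h := (hmem α j).1 (w k) (hw k) _ hγ
      have : w k + (w j - w k) = w j := by ring
      rwa [this] at h
    -- rank 1 relation at w k
    have hrel : ∀ α α', f α j (w k) * f α' k (w k) = f α k (w k) * f α' j (w k) := by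
      intro α α'
      exact hrk α α' j k (w k) (hw k)
    rw [← Matrix.exists_mulVec_eq_zero_iff]
    by_cases hv : ∀ α, f α k (w k) = 0
    · refine ⟨Pi.single k 1, ?_, ?_⟩
      · intro h
        have := congrFun h k
        simp at this
      · rw [Matrix.mulVec_single]
        funext α
        simp [hM, hv α]
    · push_neg at hv
      obtain ⟨α₀, hα₀⟩ := hv
      set c : ℂ := f α₀ j (w k) / f α₀ k (w k) with hc
      have hcol : ∀ α, f α j (w j) = c * f α k (w k) := by
        intro α
        rw [hper α, hc]
        field_simp
        linear_combination hrel α α₀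
      refine ⟨Pi.single j 1 + Pi.single k (-c), ?_, ?_⟩
      · intro h
        have := congrFun h j
        simp [Pi.single_apply, hjk, Ne.symm hjk] at this
      · rw [Matrix.mulVec_add, Matrix.mulVec_single, Matrix.mulVec_single]
        funext α
        simp only [Pi.add_apply, mul_one, Pi.zero_apply]
        simp only [Pi.smul_apply, op_smul_eq_mul, Matrix.col_apply, mul_one]
        have : M α j = f α j (w j) := rfl
        rw [this]
        have : M α k = f α k (w k) := rfl
        rw [this, hcol α]
        ring
  intro z hz hex
  have h1 : Matrix.det (Matrix.of fun α β => f α β (z β)) = 0 := main z hz hex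
  refine ⟨h1, ?_⟩
  have : ∀ σ : Equiv.Perm (Fin (p + 1)),
      Matrix.det (Matrix.of fun α β => f α β (z (σ β))) = 0 := by
    intro σ
    obtain ⟨j, k, hjk, hγ⟩ := hex
    exact main (fun β => z (σ β)) (fun i => hz (σ i))
      ⟨σ⁻¹ j, σ⁻¹ k, fun h => hjk (by simpa using congrArg σ h), by simpa using hγ⟩
  rw [Finset.sum_congr rfl (fun σ _ => this σ)]
  simp
end
end
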